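/- Let Y be a real Banach space and let X = X₁ ⊕_a X₂ be the absolute sum of real Banach spaces X₁ and X₂ with respect to an absolute norm N which is of type 1 or of type ∞ (so X₁ is an absolute summand of X of type 1 or ∞). If the pair (X₁ ⊕_a X₂, Y) has the Bishop–Phelps–Bollobás property for compact operators, then the pair (X₁, Y) has the Bishop–Phelps–Bollobás property for compact operators. -/

import Mathlib

open Filter Topology

/-- `N` is an absolute norm on `ℝ²`: a norm with `N(1,0)=N(0,1)=1` and
`N(s,t)=N(|s|,|t|)`. -/
structure IsAbsoluteNorm (N : ℝ → ℝ → ℝ) : Prop where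
  nonneg : ∀ s t : ℝ, 0 ≤ N s t
  eq_zero_iff : ∀ s t : ℝ, N s t = 0 ↔ s = 0 ∧ t = 0
  triangle : ∀ s₁ t₁ s₂ t₂ : ℝ, N (s₁ + s₂) (t₁ + t₂) ≤ N s₁ t₁ + N s₂ t₂
  smul : ∀ c s t : ℝ, N (c * s) (c * t) = |c| * N s t
  one_zero : N 1 0 = 1
  zero_one : N 0 1 = 1
  abs_eq : ∀ s t : ℝ, N s t = N |s| |t|

/-- An absolute norm is of type 1 if `|x| + K|y| ≤ N(x,y)` for some `K > 0`. -/
def AbsNormTypeOne (N : ℝ → ℝ → ℝ) : Prop :=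
  ∃ K : ℝ, 0 < K ∧ ∀ x y : ℝ, |x| + K * |y| ≤ N x y

/-- An absolute norm is of type ∞ if `N(1,b₀) = 1` for some `b₀ > 0`. -/
def AbsNormTypeInfty (N : ℝ → ℝ → ℝ) : Prop :=
  ∃ b₀ : ℝ, 0 < b₀ ∧ N 1 b₀ = 1

/-- The pair `(X, Y)` has the Bishop–Phelps–Bollobás property for compact operators. -/
def HasBPBpCompact (X Y : Type*) [NormedAddCommGroup X] [NormedSpace ℝ X]
    [NormedAddCommGroup Y] [NormedSpace ℝ Y] : Prop :=
  ∀ ε : ℝ, 0 < ε → ∃ η : ℝ, 0 < η ∧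
    ∀ (T : X →L[ℝ] Y) (x₀ : X), IsCompactOperator (⇑T) →
      ‖T‖ = 1 → ‖x₀‖ = 1 → 1 - η < ‖T x₀‖ →
      ∃ (S : X →L[ℝ] Y) (x₁ : X), IsCompactOperator (⇑S) ∧
        ‖S‖ = 1 ∧ ‖x₁‖ = 1 ∧ ‖S x₁‖ = 1 ∧ ‖x₁ - x₀‖ < ε ∧ ‖S - T‖ < ε

namespace IsAbsoluteNorm
variable {N : ℝ → ℝ → ℝ}

lemma fst_zero (hN : IsAbsoluteNorm N) (s : ℝ) : N s 0 = |s| := by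
  have h := hN.smul s 1 0
  rwa [mul_one, mul_zero, hN.one_zero, mul_one] at h

lemma zero_snd (hN : IsAbsoluteNorm N) (t : ℝ) : N 0 t = |t| := by
  have h := hN.smul t 0 1
  rwa [mul_one, mul_zero, hN.zero_one, mul_one] at h

lemma abs_fst_le (hN : IsAbsoluteNorm N) (s t : ℝ) : |s| ≤ N s t := by
  have h := hN.triangle s t s (-t)
  rw [add_neg_cancel] at h
  have h1 : N s (-t) = N s t := by rw [hN.abs_eq s (-t), abs_neg, ← hN.abs_eq]
  rw [h1, fst_zero hN] at h
  have h2 : |s + s| = 2 * |s| := by rw [← two_mul, abs_mul]; norm_num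
  linarith [h2 ▸ h]

lemma abs_snd_le (hN : IsAbsoluteNorm N) (s t : ℝ) : |t| ≤ N s t := by
  have h := hN.triangle s t (-s) t
  rw [add_neg_cancel] at h
  have h1 : N (-s) t = N s t := by rw [hN.abs_eq (-s) t, abs_neg, ← hN.abs_eq]
  rw [h1, zero_snd hN] at h
  have h2 : |t + t| = 2 * |t| := by rw [← two_mul, abs_mul]; norm_num
  linarith [h2 ▸ h]

lemma mono_snd (hN : IsAbsoluteNorm N) {a c c' : ℝ} (hc : 0 ≤ c) (hcc : c ≤ c') :
    N a c ≤ N a c' := by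
  rcases eq_or_lt_of_le (hc.trans hcc) with h0 | h0
  · have : c = 0 := le_antisymm (by rw [← h0] at hcc; exact hcc) hc
    rw [this, ← h0]
  · set l : ℝ := (c' + c) / (2 * c') with hl
    have hl0 : 0 ≤ l := by positivity
    have hl1 : l ≤ 1 := by
      rw [hl, div_le_one (by linarith)]; linarith
    have hNneg : N a (-c') = N a c' := by
      rw [hN.abs_eq a (-c'), abs_neg, ← hN.abs_eq]
    have key := hN.triangle (l * a) (l * c') ((1 - l) * a) ((1 - l) * (-c'))
    have e1 : l * a + (1 - l) * a = a := by ring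
    have e2 : l * c' + (1 - l) * (-c') = c := by
      rw [hl]; field_simp; ring
    rw [e1, e2, hN.smul l a c', hN.smul (1 - l) a (-c'), hNneg,
      abs_of_nonneg hl0, abs_of_nonneg (by linarith : (0:ℝ) ≤ 1 - l)] at key
    nlinarith [hN.nonneg a c']

lemma le_of_snd_le (hN : IsAbsoluteNorm N) {a c b₀ : ℝ} (hb : N 1 b₀ = 1) (ha : 0 ≤ a)
    (hc : 0 ≤ c) (hcb : c ≤ b₀ * a) : N a c ≤ a := by
  have h1 : N a c ≤ N a (a * b₀) := hN.mono_snd hc (by linarith [mul_comm b₀ a])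
  have h2 : N a (a * b₀) = a := by
    have := hN.smul a 1 b₀
    rwa [mul_one, hb, mul_one, abs_of_nonneg ha] at this
  linarith

end IsAbsoluteNorm

/-- A rank-one operator `w ↦ f w • v` is a compact operator. -/
lemma isCompactOperator_smulRight {E F : Type*} [NormedAddCommGroup E] [NormedSpace ℝ E]
    [NormedAddCommGroup F] [NormedSpace ℝ F] (f : E →L[ℝ] ℝ) (v : F) :
    IsCompactOperator ⇑(f.smulRight v) := by
  have hf : IsCompactOperator ⇑f := by
    refine ⟨Metric.closedBall 0 (‖f‖ + 1), isCompact_closedBall 0 _, ?_⟩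
    refine Filter.mem_of_superset (Metric.ball_mem_nhds 0 one_pos) ?_
    intro x hx
    simp only [Set.mem_preimage, Metric.mem_closedBall, dist_zero_right]
    rw [Metric.mem_ball, dist_zero_right] at hx
    calc ‖f x‖ ≤ ‖f‖ * ‖x‖ := f.le_opNorm x
      _ ≤ ‖f‖ * 1 := mul_le_mul_of_nonneg_left hx.le (norm_nonneg f)
      _ ≤ ‖f‖ + 1 := by linarith
  have h := hf.clm_comp ((1 : ℝ →L[ℝ] ℝ).smulRight v)
  have heq : ⇑(f.smulRight v) = ⇑((1 : ℝ →L[ℝ] ℝ).smulRight v) ∘ ⇑f := by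
    funext x
    simp [ContinuousLinearMap.smulRight_apply]
  rw [heq]
  exact h

theorem bpbp_compact_absolute_summand_domain (X X₁ X₂ Y : Type*)
    [NormedAddCommGroup X] [NormedSpace ℝ X] [CompleteSpace X]
    [NormedAddCommGroup X₁] [NormedSpace ℝ X₁] [CompleteSpace X₁]
    [NormedAddCommGroup X₂] [NormedSpace ℝ X₂] [CompleteSpace X₂]
    [NormedAddCommGroup Y] [NormedSpace ℝ Y] [CompleteSpace Y]
    (N : ℝ → ℝ → ℝ) (hN : IsAbsoluteNorm N)
    (e : X ≃L[ℝ] X₁ × X₂) (he : ∀ x : X, ‖x‖ = N ‖(e x).1‖ ‖(e x).2‖)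
    (htype : AbsNormTypeOne N ∨ AbsNormTypeInfty N)
    (h : HasBPBpCompact X Y) : HasBPBpCompact X₁ Y := by
  -- the canonical embeddings
  set ι₁ : X₁ →L[ℝ] X := (e.symm : X₁ × X₂ →L[ℝ] X).comp (ContinuousLinearMap.inl ℝ X₁ X₂)
    with hι₁def
  set ι₂ : X₂ →L[ℝ] X := (e.symm : X₁ × X₂ →L[ℝ] X).comp (ContinuousLinearMap.inr ℝ X₁ X₂)
    with hι₂def
  have hι₁ : ∀ w : X₁, ι₁ w = e.symm (w, 0) := fun w => rfl
  have hι₂ : ∀ z : X₂, ι₂ z = e.symm (0, z) := fun z => rfl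
  have hsymm_norm : ∀ (w : X₁) (z : X₂), ‖e.symm (w, z)‖ = N ‖w‖ ‖z‖ := by
    intro w z
    rw [he (e.symm (w, z)), e.apply_symm_apply]
  have hι₁norm : ∀ w : X₁, ‖ι₁ w‖ = ‖w‖ := by
    intro w; rw [hι₁, hsymm_norm, norm_zero, hN.fst_zero, abs_norm]
  have hι₂norm : ∀ z : X₂, ‖ι₂ z‖ = ‖z‖ := by
    intro z; rw [hι₂, hsymm_norm, norm_zero, hN.zero_snd, abs_norm]
  have hsplit : ∀ (w : X₁) (z : X₂), e.symm (w, z) = ι₁ w + ι₂ z := by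
    intro w z
    rw [hι₁, hι₂, ← map_add]
    congr 1
    simp
  have hfstle : ∀ x : X, ‖(e x).1‖ ≤ ‖x‖ := by
    intro x; rw [he x]
    simpa [abs_norm] using hN.abs_fst_le ‖(e x).1‖ ‖(e x).2‖
  -- the common part of both cases
  have aux : ∀ ε' : ℝ, 0 < ε' → ∃ η : ℝ, 0 < η ∧
      ∀ (T₁ : X₁ →L[ℝ] Y) (x₀ : X₁), IsCompactOperator (⇑T₁) → ‖T₁‖ = 1 → ‖x₀‖ = 1 →
        1 - η < ‖T₁ x₀‖ →
        ∃ (A : X₁ →L[ℝ] Y) (B : X₂ →L[ℝ] Y) (u₁ : X₁) (u₂ : X₂),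
          IsCompactOperator (⇑A) ∧
          (∀ (w : X₁) (z : X₂), ‖A w + B z‖ ≤ N ‖w‖ ‖z‖) ∧
          ‖A u₁ + B u₂‖ = 1 ∧ N ‖u₁‖ ‖u₂‖ = 1 ∧
          N ‖u₁ - x₀‖ ‖u₂‖ < ε' ∧ ‖A - T₁‖ < ε' ∧ ‖B‖ ≤ ε' := by
    intro ε' hε'
    obtain ⟨η, hη, hmain⟩ := h ε' hε'
    refine ⟨η, hη, ?_⟩
    intro T₁ x₀ hT₁c hT₁n hx₀ hclose
    set T : X →L[ℝ] Y :=
      T₁.comp ((ContinuousLinearMap.fst ℝ X₁ X₂).comp (e : X →L[ℝ] X₁ × X₂)) with hTdef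
    have hTx : ∀ x : X, T x = T₁ (e x).1 := fun x => rfl
    have hTι₁ : ∀ w : X₁, T (ι₁ w) = T₁ w := by
      intro w; rw [hTx, hι₁, e.apply_symm_apply]
    have hTι₂ : ∀ z : X₂, T (ι₂ z) = 0 := by
      intro z; rw [hTx, hι₂, e.apply_symm_apply]; exact map_zero T₁
    have hTle : ‖T‖ ≤ 1 := by
      refine T.opNorm_le_bound zero_le_one fun x => ?_
      rw [one_mul, hTx]
      calc ‖T₁ (e x).1‖ ≤ ‖T₁‖ * ‖(e x).1‖ := T₁.le_opNorm _
        _ = ‖(e x).1‖ := by rw [hT₁n, one_mul]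
        _ ≤ ‖x‖ := hfstle x
    have hTnorm : ‖T‖ = 1 := by
      refine le_antisymm hTle ?_
      rw [← hT₁n]
      refine T₁.opNorm_le_bound (norm_nonneg T) fun w => ?_
      rw [← hTι₁ w]
      calc ‖T (ι₁ w)‖ ≤ ‖T‖ * ‖ι₁ w‖ := T.le_opNorm _
        _ = ‖T‖ * ‖w‖ := by rw [hι₁norm]
    have hTc : IsCompactOperator (⇑T) :=
      hT₁c.comp_clm ((ContinuousLinearMap.fst ℝ X₁ X₂).comp (e : X →L[ℝ] X₁ × X₂))
    have hx0 : ‖ι₁ x₀‖ = 1 := by rw [hι₁norm, hx₀]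
    have hTx0 : 1 - η < ‖T (ι₁ x₀)‖ := by rw [hTι₁]; exact hclose
    obtain ⟨S, x₁', hSc, hSn, hx₁'n, hSx₁', hdist', hSTdist⟩ :=
      hmain T (ι₁ x₀) hTc hTnorm hx0 hTx0
    refine ⟨S.comp ι₁, S.comp ι₂, (e x₁').1, (e x₁').2, ?_, ?_, ?_, ?_, ?_, ?_, ?_⟩
    · exact hSc.comp_clm ι₁
    · intro w z
      simp only [ContinuousLinearMap.comp_apply]
      rw [← map_add, ← hsplit]
      calc ‖S (e.symm (w, z))‖ ≤ ‖S‖ * ‖e.symm (w, z)‖ := S.le_opNorm _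
        _ = N ‖w‖ ‖z‖ := by rw [hSn, one_mul, hsymm_norm]
    · simp only [ContinuousLinearMap.comp_apply]
      rw [← map_add, ← hsplit]
      have hpair : ((e x₁').1, (e x₁').2) = e x₁' := rfl
      rw [hpair, e.symm_apply_apply]
      exact hSx₁'
    · rw [← he]; exact hx₁'n
    · have h2 : e (x₁' - ι₁ x₀) = ((e x₁').1 - x₀, (e x₁').2) := by
        rw [map_sub, hι₁, e.apply_symm_apply]
        ext <;> simp
      have h1 : ‖x₁' - ι₁ x₀‖ = N ‖(e x₁').1 - x₀‖ ‖(e x₁').2‖ := by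
        rw [he (x₁' - ι₁ x₀), h2]
      rw [← h1]; exact hdist'
    · have key : ∀ w : X₁, ‖(S.comp ι₁ - T₁) w‖ ≤ ‖S - T‖ * ‖w‖ := by
        intro w
        have heq : (S.comp ι₁ - T₁) w = (S - T) (ι₁ w) := by
          simp [hTι₁ w]
        rw [heq]
        calc ‖(S - T) (ι₁ w)‖ ≤ ‖S - T‖ * ‖ι₁ w‖ := (S - T).le_opNorm _
          _ = ‖S - T‖ * ‖w‖ := by rw [hι₁norm]
      exact lt_of_le_of_lt
        ((S.comp ι₁ - T₁).opNorm_le_bound (norm_nonneg _) key) hSTdist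
    · refine (S.comp ι₂).opNorm_le_bound hε'.le fun z => ?_
      have heq : (S.comp ι₂) z = (S - T) (ι₂ z) := by
        simp [hTι₂ z]
      rw [heq]
      calc ‖(S - T) (ι₂ z)‖ ≤ ‖S - T‖ * ‖ι₂ z‖ := (S - T).le_opNorm _
        _ ≤ ε' * ‖z‖ := by
            rw [hι₂norm]
            exact mul_le_mul_of_nonneg_right hSTdist.le (norm_nonneg _)
  -- now the two cases
  intro ε hε
  rcases htype with ⟨K, hK, hKle⟩ | ⟨b₀, hb₀, hNb⟩
  · -- type 1
    set ε' : ℝ := min (ε / 2) (K / 2) with hε'def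
    have hε'pos : 0 < ε' := lt_min (by linarith) (by linarith)
    have hε'ε : ε' ≤ ε / 2 := min_le_left _ _
    have hε'K : ε' ≤ K / 2 := min_le_right _ _
    obtain ⟨η, hη, hmain⟩ := aux ε' hε'pos
    refine ⟨η, hη, ?_⟩
    intro T₁ x₀ hT₁c hT₁n hx₀ hclose
    obtain ⟨A, B, u₁, u₂, hAc, hbound, hatt, hNu, hdist, hAT, hB⟩ :=
      hmain T₁ x₀ hT₁c hT₁n hx₀ hclose
    have hAle : ∀ w, ‖A w‖ ≤ ‖w‖ := by
      intro w
      have h0 := hbound w 0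
      rwa [map_zero, add_zero, norm_zero, hN.fst_zero, abs_norm] at h0
    have hKu : ‖u₁‖ + K * ‖u₂‖ ≤ 1 := by
      have h0 := hKle ‖u₁‖ ‖u₂‖
      rw [abs_norm, abs_norm] at h0
      linarith [h0.trans_eq hNu]
    have h2 : 1 ≤ ‖u₁‖ + ‖B‖ * ‖u₂‖ := by
      calc (1:ℝ) = ‖A u₁ + B u₂‖ := hatt.symm
        _ ≤ ‖A u₁‖ + ‖B u₂‖ := norm_add_le _ _
        _ ≤ ‖u₁‖ + ‖B‖ * ‖u₂‖ := add_le_add (hAle u₁) (B.le_opNorm u₂)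
    have hu₂0 : u₂ = 0 := by
      have hBK : ‖B‖ < K := lt_of_le_of_lt hB (lt_of_le_of_lt hε'K (by linarith))
      have h3 : K * ‖u₂‖ ≤ ‖B‖ * ‖u₂‖ := by linarith
      have hle : ‖u₂‖ ≤ 0 := by
        by_contra hpos
        push_neg at hpos
        have h4 := mul_lt_mul_of_pos_right hBK hpos
        linarith
      exact norm_le_zero_iff.mp hle
    have hu₁ : ‖u₁‖ = 1 := by
      have h0 := hNu
      rwa [hu₂0, norm_zero, hN.fst_zero, abs_norm] at h0
    have hAu₁ : ‖A u₁‖ = 1 := by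
      have h0 := hatt
      rwa [hu₂0, map_zero, add_zero] at h0
    have hAn : ‖A‖ = 1 := by
      refine le_antisymm
        (A.opNorm_le_bound zero_le_one fun w => by rw [one_mul]; exact hAle w) ?_
      calc (1:ℝ) = ‖A u₁‖ := hAu₁.symm
        _ ≤ ‖A‖ * ‖u₁‖ := A.le_opNorm u₁
        _ = ‖A‖ := by rw [hu₁, mul_one]
    refine ⟨A, u₁, hAc, hAn, hu₁, hAu₁, ?_, ?_⟩
    · have h5 : ‖u₁ - x₀‖ ≤ N ‖u₁ - x₀‖ ‖u₂‖ := by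
        simpa [abs_norm] using hN.abs_fst_le ‖u₁ - x₀‖ ‖u₂‖
      linarith
    · linarith
  · -- type ∞
    set ε' : ℝ := min (ε / 2) (min (b₀ / 2) (1 / 2)) with hε'def
    have hε'pos : 0 < ε' := lt_min (by linarith) (lt_min (by linarith) (by norm_num))
    have hε'ε : ε' ≤ ε / 2 := min_le_left _ _
    have hε'b : ε' ≤ b₀ / 2 := (min_le_right _ _).trans (min_le_left _ _)
    have hε'h : ε' ≤ 1 / 2 := (min_le_right _ _).trans (min_le_right _ _)
    obtain ⟨η, hη, hmain⟩ := aux ε' hε'pos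
    refine ⟨η, hη, ?_⟩
    intro T₁ x₀ hT₁c hT₁n hx₀ hclose
    obtain ⟨A, B, u₁, u₂, hAc, hbound, hatt, hNu, hdist, hAT, hB⟩ :=
      hmain T₁ x₀ hT₁c hT₁n hx₀ hclose
    have h5 : ‖u₁ - x₀‖ ≤ N ‖u₁ - x₀‖ ‖u₂‖ := by
      simpa [abs_norm] using hN.abs_fst_le ‖u₁ - x₀‖ ‖u₂‖
    have h6 : ‖u₂‖ ≤ N ‖u₁ - x₀‖ ‖u₂‖ := by
      simpa [abs_norm] using hN.abs_snd_le ‖u₁ - x₀‖ ‖u₂‖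
    have hu₂ : ‖u₂‖ < ε' := by linarith
    have hu₁x₀ : ‖u₁ - x₀‖ < ε' := by linarith
    have hu₁lb : 1 - ε' ≤ ‖u₁‖ := by
      have h7 := norm_sub_norm_le x₀ u₁
      rw [norm_sub_rev, hx₀] at h7
      linarith
    have hu₁pos : (0:ℝ) < ‖u₁‖ := by linarith
    have hu₁ne : u₁ ≠ 0 := norm_pos_iff.mp hu₁pos
    obtain ⟨g, hg1, hgu⟩ := exists_dual_vector ℝ u₁ (norm_ne_zero_iff.mpr hu₁ne)
    set f : X₁ →L[ℝ] ℝ := ‖u₁‖⁻¹ • g with hfdef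
    have hfu₁ : f u₁ = 1 := by
      rw [hfdef]
      simp only [ContinuousLinearMap.smul_apply, smul_eq_mul]
      rw [hgu, RCLike.ofReal_real_eq_id, id]
      field_simp
    have hfle : ∀ w, |f w| ≤ ‖u₁‖⁻¹ * ‖w‖ := by
      intro w
      have h8 : |g w| ≤ ‖w‖ := by
        have h8' := g.le_opNorm w
        rwa [hg1, one_mul, Real.norm_eq_abs] at h8'
      have h9 : f w = ‖u₁‖⁻¹ * g w := by
        rw [hfdef]; simp
      rw [h9, abs_mul, abs_of_nonneg (inv_nonneg.mpr hu₁pos.le)]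
      exact mul_le_mul_of_nonneg_left h8 (inv_nonneg.mpr hu₁pos.le)
    set S₁ : X₁ →L[ℝ] Y := A + f.smulRight (B u₂) with hS₁def
    have hS₁w : ∀ w, S₁ w = A w + B (f w • u₂) := by
      intro w
      rw [hS₁def]
      simp [ContinuousLinearMap.smulRight_apply, map_smul]
    have hu₂b : ‖u₂‖ ≤ b₀ * ‖u₁‖ := by
      have hhalf : (1:ℝ) / 2 ≤ ‖u₁‖ := by linarith
      calc ‖u₂‖ ≤ b₀ / 2 := by linarith
        _ = b₀ * (1 / 2) := by ring
        _ ≤ b₀ * ‖u₁‖ := mul_le_mul_of_nonneg_left hhalf hb₀.le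
    have hinv : ‖u₁‖⁻¹ * ‖u₂‖ ≤ b₀ := by
      have h7 := mul_le_mul_of_nonneg_left hu₂b (inv_nonneg.mpr hu₁pos.le)
      have h8 : ‖u₁‖⁻¹ * (b₀ * ‖u₁‖) = b₀ := by field_simp
      linarith
    have hS₁le : ∀ w, ‖S₁ w‖ ≤ ‖w‖ := by
      intro w
      rw [hS₁w]
      calc ‖A w + B (f w • u₂)‖ ≤ N ‖w‖ ‖f w • u₂‖ := hbound w _
        _ ≤ ‖w‖ := by
          refine hN.le_of_snd_le hNb (norm_nonneg w) (norm_nonneg _) ?_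
          rw [norm_smul, Real.norm_eq_abs]
          calc |f w| * ‖u₂‖ ≤ (‖u₁‖⁻¹ * ‖w‖) * ‖u₂‖ :=
              mul_le_mul_of_nonneg_right (hfle w) (norm_nonneg _)
            _ = (‖u₁‖⁻¹ * ‖u₂‖) * ‖w‖ := by ring
            _ ≤ b₀ * ‖w‖ := mul_le_mul_of_nonneg_right hinv (norm_nonneg _)
    have hS₁u₁ : S₁ u₁ = A u₁ + B u₂ := by
      rw [hS₁w, hfu₁, one_smul]
    have hS₁u₁n : ‖S₁ u₁‖ = 1 := by rw [hS₁u₁]; exact hatt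
    have hu₁le : ‖u₁‖ ≤ 1 := by
      have h7 : ‖u₁‖ ≤ N ‖u₁‖ ‖u₂‖ := by
        simpa [abs_norm] using hN.abs_fst_le ‖u₁‖ ‖u₂‖
      linarith [hNu]
    have hu₁1 : ‖u₁‖ = 1 := by
      refine le_antisymm hu₁le ?_
      calc (1:ℝ) = ‖S₁ u₁‖ := hS₁u₁n.symm
        _ ≤ ‖u₁‖ := hS₁le u₁
    have hS₁n : ‖S₁‖ = 1 := by
      refine le_antisymm
        (S₁.opNorm_le_bound zero_le_one fun w => by rw [one_mul]; exact hS₁le w) ?_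
      calc (1:ℝ) = ‖S₁ u₁‖ := hS₁u₁n.symm
        _ ≤ ‖S₁‖ * ‖u₁‖ := S₁.le_opNorm u₁
        _ = ‖S₁‖ := by rw [hu₁1, mul_one]
    have hS₁c : IsCompactOperator ⇑S₁ := by
      have hco : ⇑S₁ = ⇑A + ⇑(f.smulRight (B u₂)) := by rw [hS₁def]; rfl
      rw [hco]
      exact hAc.add (isCompactOperator_smulRight f (B u₂))
    have hS₁T₁ : ‖S₁ - T₁‖ < ε := by
      have hr : ‖f.smulRight (B u₂)‖ ≤ ‖u₁‖⁻¹ * (‖B‖ * ‖u₂‖) := by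
        refine (f.smulRight (B u₂)).opNorm_le_bound (by positivity) fun w => ?_
        rw [ContinuousLinearMap.smulRight_apply, norm_smul, Real.norm_eq_abs]
        have hBu : ‖B u₂‖ ≤ ‖B‖ * ‖u₂‖ := B.le_opNorm u₂
        calc |f w| * ‖B u₂‖ ≤ (‖u₁‖⁻¹ * ‖w‖) * ‖B u₂‖ :=
            mul_le_mul_of_nonneg_right (hfle w) (norm_nonneg _)
          _ ≤ (‖u₁‖⁻¹ * ‖w‖) * (‖B‖ * ‖u₂‖) := by
              refine mul_le_mul_of_nonneg_left hBu ?_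
              positivity
          _ = ‖u₁‖⁻¹ * (‖B‖ * ‖u₂‖) * ‖w‖ := by ring
      have h9 : ‖S₁ - T₁‖ ≤ ‖A - T₁‖ + ‖f.smulRight (B u₂)‖ := by
        have heq : S₁ - T₁ = (A - T₁) + f.smulRight (B u₂) := by
          rw [hS₁def]; abel
        rw [heq]
        exact norm_add_le _ _
      rw [hu₁1] at hr
      norm_num at hr h9
      have h10 : ‖B‖ * ‖u₂‖ ≤ ε' * ε' :=
        mul_le_mul hB hu₂.le (norm_nonneg _) hε'pos.le
      have h11 : ε' * ε' ≤ ε' * (1 / 2) := mul_le_mul_of_nonneg_left hε'h hε'pos.le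
      linarith
    refine ⟨S₁, u₁, hS₁c, hS₁n, hu₁1, hS₁u₁n, ?_, hS₁T₁⟩
    linarith
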